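/- Under the setup of the previous lemma (C ≥ 2, J ≤ C, random permutation sampling), the exact value of the double sum is ∑_{c=1}^J ∑_{i=0}^{I-1} E[‖I∑_{k=1}^{c-1}(X_{ψ_k}-x̄) + i(X_{ψ_c}-x̄)‖²] = ν² [ (1/2) J I² (JI - 1) - (1/6) J I (I² - 1) - (1/(C-1)) (J-1) J I² ( (1/6)(2J-1) I - 1/2 ) ]. -/

import Mathlib

open Finset

lemma sum_range_cast' (n : ℕ) : ∑ i ∈ Finset.range n, (i : ℝ) = n * (n - 1) / 2 := by
  induction n with
  | zero => simp
  | succ n ih => rw [Finset.sum_range_succ, ih]; push_cast; ring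

lemma sum_range_sq_cast' (n : ℕ) :
    ∑ i ∈ Finset.range n, (i : ℝ) ^ 2 = n * (n - 1) * (2 * n - 1) / 6 := by
  induction n with
  | zero => simp
  | succ n ih => rw [Finset.sum_range_succ, ih]; push_cast; ring

lemma sum_quadratic (a b c : ℝ) (n : ℕ) :
    ∑ i ∈ Finset.range n, (a + b * i + c * (i : ℝ) ^ 2)
      = n * a + b * (n * (n - 1) / 2) + c * (n * (n - 1) * (2 * n - 1) / 6) := by
  rw [Finset.sum_add_distrib, Finset.sum_add_distrib, ← Finset.mul_sum, ← Finset.mul_sum,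
    sum_range_cast', sum_range_sq_cast', Finset.sum_const, Finset.card_range, nsmul_eq_mul]

open scoped RealInnerProductSpace

variable {d C : ℕ}

lemma perm_expect (hC : 2 ≤ C) (y : Fin C → EuclideanSpace ℝ (Fin d))
    (hy : ∑ j, y j = 0) (a : Fin C → ℝ) :
    (C.factorial : ℝ)⁻¹ * ∑ ψ : Equiv.Perm (Fin C), ‖∑ k, a k • y (ψ k)‖ ^ 2
      = ((C : ℝ)⁻¹ * ∑ j, ‖y j‖ ^ 2)
          * ((∑ k, a k ^ 2) - (((∑ k, a k) ^ 2 - ∑ k, a k ^ 2) / ((C : ℝ) - 1))) := by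
  set S : ℝ := ∑ j, ‖y j‖ ^ 2 with hS
  have hC0 : (C : ℝ) ≠ 0 := by
    have : (0:ℝ) < C := by exact_mod_cast Nat.lt_of_lt_of_le (by norm_num) hC
    linarith
  have hC1 : (C : ℝ) - 1 ≠ 0 := by
    have : (2:ℝ) ≤ C := by exact_mod_cast hC
    linarith
  have hfac : (C.factorial : ℝ) ≠ 0 := by
    exact_mod_cast Nat.factorial_ne_zero C
  -- diagonal is constant in k
  have hDconst : ∀ k k' : Fin C,
      ∑ ψ : Equiv.Perm (Fin C), ‖y (ψ k)‖ ^ 2 = ∑ ψ : Equiv.Perm (Fin C), ‖y (ψ k')‖ ^ 2 := by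
    intro k k'
    have h := Equiv.sum_comp (Equiv.mulRight (Equiv.swap k k'))
      (fun ψ : Equiv.Perm (Fin C) => ‖y (ψ k')‖ ^ 2)
    simpa [Equiv.Perm.mul_apply, Equiv.swap_apply_right] using h
  have hD : ∀ k : Fin C,
      ∑ ψ : Equiv.Perm (Fin C), ‖y (ψ k)‖ ^ 2 = (C.factorial : ℝ) * S / C := by
    intro k
    have h1 : ∑ k' : Fin C, ∑ ψ : Equiv.Perm (Fin C), ‖y (ψ k')‖ ^ 2
        = (C : ℝ) * ∑ ψ : Equiv.Perm (Fin C), ‖y (ψ k)‖ ^ 2 := by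
      rw [Finset.sum_congr rfl (fun k' _ => hDconst k' k), Finset.sum_const, Finset.card_univ,
        Fintype.card_fin, nsmul_eq_mul]
    have h2 : ∑ k' : Fin C, ∑ ψ : Equiv.Perm (Fin C), ‖y (ψ k')‖ ^ 2
        = (C.factorial : ℝ) * S := by
      rw [Finset.sum_comm]
      have : ∀ ψ : Equiv.Perm (Fin C), ∑ k' : Fin C, ‖y (ψ k')‖ ^ 2 = S :=
        fun ψ => Equiv.sum_comp ψ (fun j => ‖y j‖ ^ 2)
      rw [Finset.sum_congr rfl (fun ψ _ => this ψ), Finset.sum_const, Finset.card_univ,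
        nsmul_eq_mul]
      norm_num [Fintype.card_perm]
    field_simp
    linarith [h1.symm.trans h2]
  -- off diagonal constant
  have hOconst : ∀ (k l l' : Fin C), l ≠ k → l' ≠ k →
      ∑ ψ : Equiv.Perm (Fin C), (inner ℝ (y (ψ k)) (y (ψ l)) : ℝ)
        = ∑ ψ : Equiv.Perm (Fin C), (inner ℝ (y (ψ k)) (y (ψ l')) : ℝ) := by
    intro k l l' hl hl'
    have h := Equiv.sum_comp (Equiv.mulRight (Equiv.swap l l'))
      (fun ψ : Equiv.Perm (Fin C) => (inner ℝ (y (ψ k)) (y (ψ l')) : ℝ))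
    simpa [Equiv.Perm.mul_apply, Equiv.swap_apply_right,
      Equiv.swap_apply_of_ne_of_ne hl.symm hl'.symm] using h
  have hO : ∀ (k l : Fin C), l ≠ k →
      ∑ ψ : Equiv.Perm (Fin C), (inner ℝ (y (ψ k)) (y (ψ l)) : ℝ)
        = -((C.factorial : ℝ) * S) / ((C : ℝ) * ((C : ℝ) - 1)) := by
    intro k l hl
    have h1 : ∑ l' ∈ Finset.univ.erase k, ∑ ψ : Equiv.Perm (Fin C), (inner ℝ (y (ψ k)) (y (ψ l')) : ℝ)
        = ((C : ℝ) - 1) * ∑ ψ : Equiv.Perm (Fin C), (inner ℝ (y (ψ k)) (y (ψ l)) : ℝ) := by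
      rw [Finset.sum_congr rfl (fun l' hl' => hOconst k l' l (Finset.mem_erase.mp hl').1 hl),
        Finset.sum_const, Finset.card_erase_of_mem (Finset.mem_univ k), Finset.card_univ,
        Fintype.card_fin, nsmul_eq_mul]
      congr 1
      push_cast [Nat.cast_sub (by omega : 1 ≤ C)]
      ring
    have h2 : ∑ l' ∈ Finset.univ.erase k, ∑ ψ : Equiv.Perm (Fin C), (inner ℝ (y (ψ k)) (y (ψ l')) : ℝ)
        = -((C.factorial : ℝ) * S / C) := by
      rw [Finset.sum_comm]
      have : ∀ ψ : Equiv.Perm (Fin C),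
          ∑ l' ∈ Finset.univ.erase k, (inner ℝ (y (ψ k)) (y (ψ l')) : ℝ) = -‖y (ψ k)‖ ^ 2 := by
        intro ψ
        rw [← inner_sum, Finset.sum_erase_eq_sub (Finset.mem_univ k),
          Equiv.sum_comp ψ y, hy]
        rw [zero_sub, inner_neg_right, real_inner_self_eq_norm_sq]
      rw [Finset.sum_congr rfl (fun ψ _ => this ψ), Finset.sum_neg_distrib,
        Finset.sum_congr rfl (fun ψ _ => rfl)]
      rw [show ∑ ψ : Equiv.Perm (Fin C), ‖y (ψ k)‖^2 = (C.factorial : ℝ) * S / C from hD k]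
    have := h1.symm.trans h2
    field_simp at this ⊢
    linarith
  -- expand the norm square
  have expand : ∀ ψ : Equiv.Perm (Fin C),
      ‖∑ k, a k • y (ψ k)‖ ^ 2
        = ∑ k, ∑ l, (a k * a l) * (inner ℝ (y (ψ k)) (y (ψ l)) : ℝ) := by
    intro ψ
    rw [← real_inner_self_eq_norm_sq, sum_inner]
    refine Finset.sum_congr rfl fun k _ => ?_
    rw [real_inner_smul_left, inner_sum, Finset.mul_sum]
    refine Finset.sum_congr rfl fun l _ => ?_
    rw [real_inner_smul_right]; ring
  have swapped : ∑ ψ : Equiv.Perm (Fin C), ‖∑ k, a k • y (ψ k)‖ ^ 2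
      = ∑ k, ∑ l, (a k * a l) * ∑ ψ : Equiv.Perm (Fin C), (inner ℝ (y (ψ k)) (y (ψ l)) : ℝ) := by
    rw [Finset.sum_congr rfl (fun ψ _ => expand ψ), Finset.sum_comm]
    refine Finset.sum_congr rfl fun k _ => ?_
    rw [Finset.sum_comm]
    exact Finset.sum_congr rfl fun l _ => by rw [Finset.mul_sum]
  have keyk : ∀ k : Fin C,
      ∑ l, (a k * a l) * ∑ ψ : Equiv.Perm (Fin C), (inner ℝ (y (ψ k)) (y (ψ l)) : ℝ)
        = a k ^ 2 * ((C.factorial : ℝ) * S / C)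
          + a k * ((∑ l, a l) - a k) * (-((C.factorial : ℝ) * S) / ((C : ℝ) * ((C : ℝ) - 1))) := by
    intro k
    rw [← Finset.add_sum_erase _ _ (Finset.mem_univ k)]
    have hdiag : ∑ ψ : Equiv.Perm (Fin C), (inner ℝ (y (ψ k)) (y (ψ k)) : ℝ)
        = (C.factorial : ℝ) * S / C := by
      rw [← hD k]
      exact Finset.sum_congr rfl fun ψ _ => real_inner_self_eq_norm_sq _
    rw [hdiag]
    have : ∑ l ∈ Finset.univ.erase k, (a k * a l) * ∑ ψ : Equiv.Perm (Fin C), (inner ℝ (y (ψ k)) (y (ψ l)) : ℝ)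
        = (∑ l ∈ Finset.univ.erase k, a l) * (a k * (-((C.factorial : ℝ) * S) / ((C : ℝ) * ((C : ℝ) - 1)))) := by
      rw [Finset.sum_mul]
      refine Finset.sum_congr rfl fun l hl => ?_
      rw [hO k l (Finset.mem_erase.mp hl).1]
      ring
    rw [this, Finset.sum_erase_eq_sub (Finset.mem_univ k)]
    ring
  rw [swapped, Finset.sum_congr rfl (fun k _ => keyk k), Finset.sum_add_distrib,
    ← Finset.sum_mul, ← Finset.sum_mul]
  have hsplit : ∑ k, a k * ((∑ l, a l) - a k) = (∑ k, a k) ^ 2 - ∑ k, a k ^ 2 := by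
    rw [Finset.sum_congr rfl (fun k _ => by ring :
      ∀ k ∈ Finset.univ, a k * ((∑ l, a l) - a k) = (∑ l, a l) * a k - a k ^ 2)]
    rw [Finset.sum_sub_distrib, ← Finset.mul_sum]
    ring
  rw [hsplit]
  field_simp
  ring

lemma vec_eq {d C : ℕ} (I m i : ℕ) (hm : m < C)
    (v : Fin C → EuclideanSpace ℝ (Fin d)) :
    (I : ℝ) • (∑ k ∈ Finset.univ.filter (fun k : Fin C => (k : ℕ) < m), v k)
      + (i : ℝ) • v ⟨m, hm⟩
    = ∑ k : Fin C,
        (if (k : ℕ) < m then (I : ℝ) else if (k : ℕ) = m then (i : ℝ) else 0) • v k := by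
  set a : Fin C → ℝ := fun k => if (k : ℕ) < m then (I : ℝ) else if (k : ℕ) = m then (i : ℝ) else 0
    with ha
  rw [← Finset.sum_filter_add_sum_filter_not Finset.univ (fun k : Fin C => (k : ℕ) < m)
    (fun k => a k • v k)]
  congr 1
  · rw [Finset.smul_sum]
    refine (Finset.sum_congr rfl fun k hk => ?_).symm
    have h : (k : ℕ) < m := (Finset.mem_filter.mp hk).2
    simp [ha, h]
  · rw [Finset.sum_eq_single (⟨m, hm⟩ : Fin C)]
    · simp [ha]
    · intro b hb hne
      have h1 : ¬ (b : ℕ) < m := (Finset.mem_filter.mp hb).2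
      have h2 : ¬ (b : ℕ) = m := fun h => hne (Fin.ext h)
      simp [ha, h1, h2]
    · intro h
      exact absurd (Finset.mem_filter.mpr ⟨Finset.mem_univ _, by simp⟩) h

lemma coeff_sq_sum {C : ℕ} (I m i : ℕ) (hm : m < C) :
    ∑ k : Fin C,
        (if (k : ℕ) < m then (I : ℝ) else if (k : ℕ) = m then (i : ℝ) else 0) ^ 2
      = m * (I : ℝ) ^ 2 + (i : ℝ) ^ 2 := by
  have hcard : (Finset.univ.filter (fun k : Fin C => (k : ℕ) < m)).card = m := by
    have h : (Finset.univ.filter (fun k : Fin C => (k : ℕ) < m))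
        = Finset.Iio (⟨m, hm⟩ : Fin C) := by ext k; simp [Fin.lt_def]
    rw [h]; simp
  rw [← Finset.sum_filter_add_sum_filter_not Finset.univ (fun k : Fin C => (k : ℕ) < m)]
  congr 1
  · rw [Finset.sum_congr rfl (fun k hk => ?_), Finset.sum_const, hcard, nsmul_eq_mul]
    have h : (k : ℕ) < m := (Finset.mem_filter.mp hk).2
    simp [h]
  · rw [Finset.sum_eq_single (⟨m, hm⟩ : Fin C)]
    · simp
    · intro b hb hne
      have h1 : ¬ (b : ℕ) < m := (Finset.mem_filter.mp hb).2
      have h2 : ¬ (b : ℕ) = m := fun h => hne (Fin.ext h)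
      simp [h1, h2]
    · intro h
      exact absurd (Finset.mem_filter.mpr ⟨Finset.mem_univ _, by simp⟩) h

lemma coeff_sum {C : ℕ} (I m i : ℕ) (hm : m < C) :
    ∑ k : Fin C,
        (if (k : ℕ) < m then (I : ℝ) else if (k : ℕ) = m then (i : ℝ) else 0)
      = m * (I : ℝ) + (i : ℝ) := by
  have hcard : (Finset.univ.filter (fun k : Fin C => (k : ℕ) < m)).card = m := by
    have h : (Finset.univ.filter (fun k : Fin C => (k : ℕ) < m))
        = Finset.Iio (⟨m, hm⟩ : Fin C) := by ext k; simp [Fin.lt_def]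
    rw [h]; simp
  rw [← Finset.sum_filter_add_sum_filter_not Finset.univ (fun k : Fin C => (k : ℕ) < m)]
  congr 1
  · rw [Finset.sum_congr rfl (fun k hk => ?_), Finset.sum_const, hcard, nsmul_eq_mul]
    have h : (k : ℕ) < m := (Finset.mem_filter.mp hk).2
    simp [h]
  · rw [Finset.sum_eq_single (⟨m, hm⟩ : Fin C)]
    · simp
    · intro b hb hne
      have h1 : ¬ (b : ℕ) < m := (Finset.mem_filter.mp hb).2
      have h2 : ¬ (b : ℕ) = m := fun h => hne (Fin.ext h)
      simp [h1, h2]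
    · intro h
      exact absurd (Finset.mem_filter.mpr ⟨Finset.mem_univ _, by simp⟩) h


/-- Exact value of the double sum in the sequential partial participation lemma:
∑_{c=1}^J ∑_{i=0}^{I-1} E‖I∑_{k=1}^{c-1}(X_{ψ_k}-x̄) + i(X_{ψ_c}-x̄)‖²
  = ν²[(1/2)JI²(JI-1) - (1/6)JI(I²-1) - (1/(C-1))(J-1)JI²((1/6)(2J-1)I - 1/2)]. -/
theorem stmt_13 {d C J I : ℕ} (hC : 2 ≤ C) (hJ1 : 1 ≤ J) (hJC : J ≤ C) (hI : 1 ≤ I)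
    (x : Fin C → EuclideanSpace ℝ (Fin d)) :
    ∑ c ∈ (Finset.Icc 1 J).attach, ∑ i ∈ Finset.range I,
        ((Nat.factorial C : ℝ))⁻¹ *
          (∑ ψ : Equiv.Perm (Fin C),
            ‖(I : ℝ) • (∑ k ∈ Finset.univ.filter (fun k : Fin C => (k : ℕ) < c.1 - 1),
                  (x (ψ k) - (C : ℝ)⁻¹ • ∑ j, x j))
              + (i : ℝ) • (x (ψ ⟨c.1 - 1, by
                    have hmem := Finset.mem_Icc.mp c.2; omega⟩)
                  - (C : ℝ)⁻¹ • ∑ j, x j)‖ ^ 2)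
      = ((C : ℝ)⁻¹ * ∑ k, ‖x k - (C : ℝ)⁻¹ • ∑ j, x j‖ ^ 2)
          * ((1 / 2 : ℝ) * J * I ^ 2 * ((J : ℝ) * I - 1)
            - (1 / 6) * J * I * ((I : ℝ) ^ 2 - 1)
            - (1 / ((C : ℝ) - 1)) * ((J : ℝ) - 1) * J * I ^ 2
                * ((1 / 6) * (2 * (J : ℝ) - 1) * I - 1 / 2)) := by
  have hC0 : (C : ℝ) ≠ 0 := by
    have : (2:ℝ) ≤ C := by exact_mod_cast hC
    linarith
  have he : (C : ℝ) - 1 ≠ 0 := by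
    have : (2:ℝ) ≤ C := by exact_mod_cast hC
    linarith
  set xbar : EuclideanSpace ℝ (Fin d) := (C : ℝ)⁻¹ • ∑ j, x j with hxbar
  set y : Fin C → EuclideanSpace ℝ (Fin d) := fun j => x j - xbar with hydef
  have hy : ∑ j, y j = 0 := by
    rw [hydef, Finset.sum_sub_distrib, Finset.sum_const, Finset.card_univ, Fintype.card_fin,
      hxbar, ← Nat.cast_smul_eq_nsmul ℝ, smul_smul, mul_inv_cancel₀ hC0, one_smul, sub_self]
  set ν2 : ℝ := (C : ℝ)⁻¹ * ∑ k, ‖y k‖ ^ 2 with hν2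
  have step1 : ∀ c : {n // n ∈ Finset.Icc 1 J}, ∀ i ∈ Finset.range I,
      ((Nat.factorial C : ℝ))⁻¹ *
          (∑ ψ : Equiv.Perm (Fin C),
            ‖(I : ℝ) • (∑ k ∈ Finset.univ.filter (fun k : Fin C => (k : ℕ) < c.1 - 1),
                  (x (ψ k) - (C : ℝ)⁻¹ • ∑ j, x j))
              + (i : ℝ) • (x (ψ ⟨c.1 - 1, by
                    have hmem := Finset.mem_Icc.mp c.2; omega⟩)
                  - (C : ℝ)⁻¹ • ∑ j, x j)‖ ^ 2)
        = ν2 * ((((c.1 - 1 : ℕ) : ℝ) * (I : ℝ) ^ 2 + (i : ℝ) ^ 2)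
            - ((((c.1 - 1 : ℕ) : ℝ) * (I : ℝ) + (i : ℝ)) ^ 2
                - (((c.1 - 1 : ℕ) : ℝ) * (I : ℝ) ^ 2 + (i : ℝ) ^ 2)) / ((C : ℝ) - 1)) := by
    intro c i _
    have hmem := Finset.mem_Icc.mp c.2
    have hm : c.1 - 1 < C := by omega
    set a : Fin C → ℝ :=
      fun k => if (k : ℕ) < c.1 - 1 then (I : ℝ) else if (k : ℕ) = c.1 - 1 then (i : ℝ) else 0
      with ha
    have h1 : ∀ ψ : Equiv.Perm (Fin C),
        (I : ℝ) • (∑ k ∈ Finset.univ.filter (fun k : Fin C => (k : ℕ) < c.1 - 1),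
              (x (ψ k) - (C : ℝ)⁻¹ • ∑ j, x j))
          + (i : ℝ) • (x (ψ ⟨c.1 - 1, hm⟩) - (C : ℝ)⁻¹ • ∑ j, x j)
        = ∑ k : Fin C, a k • y (ψ k) := fun ψ =>
      vec_eq I (c.1 - 1) i hm (fun k => x (ψ k) - xbar)
    simp only [h1]
    rw [perm_expect hC y hy a, ha,
      coeff_sq_sum I (c.1 - 1) i hm, coeff_sum I (c.1 - 1) i hm]
  rw [Finset.sum_congr rfl fun c _ => Finset.sum_congr rfl fun i hi => step1 c i hi,
    Finset.sum_attach (Finset.Icc 1 J)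
      (fun n => ∑ i ∈ Finset.range I,
        ν2 * ((((n - 1 : ℕ) : ℝ) * (I : ℝ) ^ 2 + (i : ℝ) ^ 2)
            - ((((n - 1 : ℕ) : ℝ) * (I : ℝ) + (i : ℝ)) ^ 2
                - (((n - 1 : ℕ) : ℝ) * (I : ℝ) ^ 2 + (i : ℝ) ^ 2)) / ((C : ℝ) - 1))),
    ← Finset.Ico_add_one_right_eq_Icc, Finset.sum_Ico_eq_sum_range]
  simp only [Nat.add_sub_cancel, Nat.add_sub_cancel_left, Nat.succ_sub_one]
  simp_rw [← Finset.mul_sum]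
  congr 1
  have inner_eq : ∀ c' ∈ Finset.range J,
      ∑ i ∈ Finset.range I,
        ((((c' : ℕ) : ℝ) * (I : ℝ) ^ 2 + (i : ℝ) ^ 2)
            - ((((c' : ℕ) : ℝ) * (I : ℝ) + (i : ℝ)) ^ 2
                - (((c' : ℕ) : ℝ) * (I : ℝ) ^ 2 + (i : ℝ) ^ 2)) / ((C : ℝ) - 1))
      = ((I : ℝ) * ((I : ℝ) - 1) * (2 * (I : ℝ) - 1) / 6)
        + ((I : ℝ) ^ 3 + ((I : ℝ) ^ 3 - (I : ℝ) ^ 2 * ((I : ℝ) - 1)) / ((C : ℝ) - 1)) * (c' : ℝ)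
        + (-(I : ℝ) ^ 3 / ((C : ℝ) - 1)) * (c' : ℝ) ^ 2 := by
    intro c' _
    have h2 : ∀ i ∈ Finset.range I,
        ((((c' : ℕ) : ℝ) * (I : ℝ) ^ 2 + (i : ℝ) ^ 2)
            - ((((c' : ℕ) : ℝ) * (I : ℝ) + (i : ℝ)) ^ 2
                - (((c' : ℕ) : ℝ) * (I : ℝ) ^ 2 + (i : ℝ) ^ 2)) / ((C : ℝ) - 1))
        = ((c' : ℝ) * (I : ℝ) ^ 2
            + ((c' : ℝ) * (I : ℝ) ^ 2 - ((c' : ℝ) * (I : ℝ)) ^ 2) / ((C : ℝ) - 1))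
          + (-(2 * (c' : ℝ) * (I : ℝ)) / ((C : ℝ) - 1)) * (i : ℝ)
          + 1 * (i : ℝ) ^ 2 := by
      intro i _
      field_simp
      ring
    rw [Finset.sum_congr rfl h2, sum_quadratic]
    field_simp
    ring
  rw [Finset.sum_congr rfl inner_eq, sum_quadratic]
  field_simp
  ring
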